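/- If an infinite binary word w has bounded width (i.e., there exist rationals a, b₁, b₂ such that the graphic g_w of w satisfies a·x + b₁ ≤ g_w(x) ≤ a·x + b₂ for all x, where g_w(n) = |pref_n(w)|₁ − |pref_n(w)|₀), then w is weakly abelian periodic: w can be factorized as w = v₀v₁v₂… with all vᵢ (i ≥ 1) nonempty finite words having the same frequency of each letter. -/

import Mathlib

open Filter Topology

/-- Number of 1's (`true`) in the length-`n` prefix of the infinite binary word `w`. -/
def ones (w : ℕ → Bool) (n : ℕ) : ℕ :=
  ((Finset.range n).filter (fun i => w i = true)).card

/-- Number of 0's (`false`) in the length-`n` prefix of `w`. -/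
def zeros (w : ℕ → Bool) (n : ℕ) : ℕ := n - ones w n

/-- The graphic of `w`: `g_w(n) = |pref_n(w)|₁ - |pref_n(w)|₀`. -/
def graphic (w : ℕ → Bool) (n : ℕ) : ℤ := (ones w n : ℤ) - (zeros w n : ℤ)

/-- `w` is weakly abelian periodic with frequency `ρ` of the letter 1 in the blocks:
there is a factorization `w = v₀v₁v₂⋯` (cut points `k 0 < k 1 < ⋯`, with `v₀` the
prefix of length `k 0`) such that each block `vᵢ = w[k i, k (i+1))`, `i ≥ 1`,
has frequency `ρ` of the letter 1. -/
def WAPwith (w : ℕ → Bool) (ρ : ℚ) : Prop :=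
  ∃ k : ℕ → ℕ, StrictMono k ∧
    ∀ i : ℕ, ((ones w (k (i+1)) : ℚ) - (ones w (k i) : ℚ))
      = ρ * ((k (i+1) : ℚ) - (k i : ℚ))

/-- `w` is weakly abelian periodic. -/
def WAP (w : ℕ → Bool) : Prop := ∃ ρ : ℚ, WAPwith w ρ

/-- `w` is bounded weakly abelian periodic: WAP with blocks of uniformly bounded length. -/
def BoundedWAP (w : ℕ → Bool) : Prop :=
  ∃ (ρ : ℚ) (k : ℕ → ℕ) (C : ℕ), StrictMono k ∧ (∀ i, k (i+1) - k i ≤ C) ∧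
    ∀ i : ℕ, ((ones w (k (i+1)) : ℚ) - (ones w (k i) : ℚ))
      = ρ * ((k (i+1) : ℚ) - (k i : ℚ))

/-- `w` has bounded width: its graphic lies between two parallel lines with
rational coefficients. -/
def BoundedWidth (w : ℕ → Bool) : Prop :=
  ∃ a b₁ b₂ : ℚ, ∀ n : ℕ,
    a * n + b₁ ≤ (graphic w n : ℚ) ∧ (graphic w n : ℚ) ≤ a * n + b₂

/-- If an infinite binary word has bounded width, then it is weakly abelian periodic. -/
lemma ones_le (w : ℕ → Bool) (n : ℕ) : ones w n ≤ n := by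
  simpa [ones] using (Finset.card_filter_le (Finset.range n) (fun i => w i = true))

lemma graphic_cast (w : ℕ → Bool) (n : ℕ) :
    (graphic w n : ℚ) = 2 * (ones w n : ℚ) - n := by
  have h := ones_le w n
  simp only [graphic, zeros]
  push_cast [Nat.cast_sub h]
  ring

lemma den_mul_self (a : ℚ) : (a.den : ℚ) * a = (a.num : ℚ) := by
  have hd : (a.den : ℚ) ≠ 0 := by exact_mod_cast a.den_nz
  rw [mul_comm, eq_comm, ← div_eq_iff hd]
  exact Rat.num_div_den a

theorem boundedWidth_imp_WAP (w : ℕ → Bool) (h : BoundedWidth w) : WAP w := by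
  obtain ⟨a, b₁, b₂, hb⟩ := h
  set F : ℕ → ℤ := fun n => (a.den : ℤ) * graphic w n - a.num * n with hF
  have hFcast : ∀ n, (F n : ℚ) = (a.den : ℚ) * ((graphic w n : ℚ) - a * n) := by
    intro n
    have := den_mul_self a
    push_cast [hF]
    ring_nf
    nlinarith [den_mul_self a]
  have hden : (0:ℚ) < (a.den : ℚ) := by exact_mod_cast a.pos
  have hmem : ∀ n, F n ∈ Set.Icc ⌈(a.den : ℚ) * b₁⌉ ⌊(a.den : ℚ) * b₂⌋ := by
    intro n
    obtain ⟨h1, h2⟩ := hb n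
    constructor
    · rw [Int.ceil_le, hFcast n]
      nlinarith
    · rw [Int.le_floor, hFcast n]
      nlinarith
  haveI : Finite (Set.Icc ⌈(a.den : ℚ) * b₁⌉ ⌊(a.den : ℚ) * b₂⌋) :=
    (Set.finite_Icc _ _).to_subtype
  obtain ⟨c, hc⟩ := Finite.exists_infinite_fiber
    (fun n => (⟨F n, hmem n⟩ : Set.Icc ⌈(a.den : ℚ) * b₁⌉ ⌊(a.den : ℚ) * b₂⌋))
  have hinf : {n : ℕ | F n = (c : ℤ)}.Infinite := by
    rw [Set.infinite_coe_iff] at hc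
    apply hc.mono
    intro n hn
    simp only [Set.mem_preimage, Set.mem_singleton_iff] at hn
    simpa [Set.mem_setOf_eq] using congrArg Subtype.val hn
  set p : ℕ → Prop := fun n => F n = (c : ℤ) with hp
  have hinf' : (setOf p).Infinite := hinf
  refine ⟨(a + 1)/2, Nat.nth p, Nat.nth_strictMono hinf', fun i => ?_⟩
  have h1 : F (Nat.nth p (i+1)) = c := Nat.nth_mem_of_infinite hinf' (i+1)
  have h2 : F (Nat.nth p i) = c := Nat.nth_mem_of_infinite hinf' i
  have key : (graphic w (Nat.nth p (i+1)) : ℚ) - graphic w (Nat.nth p i)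
      = a * ((Nat.nth p (i+1) : ℚ) - Nat.nth p i) := by
    have e : (F (Nat.nth p (i+1)) : ℚ) = (F (Nat.nth p i) : ℚ) := by rw [h1, h2]
    rw [hFcast, hFcast] at e
    have := mul_left_cancel₀ (ne_of_gt hden) e
    linarith
  have g1 := graphic_cast w (Nat.nth p (i+1))
  have g2 := graphic_cast w (Nat.nth p i)
  rw [g1, g2] at key
  linarith
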